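/- arXiv:2306.16937 — 3 statements merged into one kernel-verified Lean document; each statement's English description precedes it below -/
import Mathlib

section
/- In a vector-valued finite-horizon MDP with horizon N = 3, property (P) holds: F_2(s) ⊆ V_2(s) and F_1(s) ⊆ V_1(s) for every state s, where F_t(s) = ⋃_{a ∈ A_s}({R_t(s,a)} ⊕ ∑_j p_t(j|s,a) U_{t+1}(j)), U_3(s) = {R_3(s)}, U_t(s) = e(F_t(s)), and V_t(s) is the set of expected total rewards from (t, s) of Markovian policies. -/
/-- Pareto efficient subset of `X ⊆ ℝ^m`. -/
def eff {m : ℕ} (X : Set (Fin m → ℝ)) : Set (Fin m → ℝ) :=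
  {x ∈ X | ∀ y ∈ X, x ≤ y → y = x}

/-- Property (P) for horizon `N = 3`: `F_2(s) ⊆ V_2(s)` and `F_1(s) ⊆ V_1(s)` for every
state `s`, where the `F_t` come from White's recursion and the `V_t` are sets of Markovian
policy values. -/
theorem P_holds_N3 {S A : Type*} [Fintype S] (m : ℕ)
    (Asets : S → Set A) (hAne : ∀ s, (Asets s).Nonempty)
    (R1 R2 : S → A → (Fin m → ℝ)) (R3 : S → Fin m → ℝ)
    (p1 p2 : S → A → S → ℝ)
    (F2 : S → Set (Fin m → ℝ))
    (hF2 : ∀ s, F2 s = ⋃ a ∈ Asets s, {v | v = R2 s a + ∑ j, p2 s a j • R3 j})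
    (U2 : S → Set (Fin m → ℝ)) (hU2 : ∀ s, U2 s = eff (F2 s))
    (F1 : S → Set (Fin m → ℝ))
    (hF1 : ∀ s, F1 s = ⋃ a ∈ Asets s, {v | ∃ w : S → (Fin m → ℝ),
      (∀ j, w j ∈ U2 j) ∧ v = R1 s a + ∑ j, p1 s a j • w j})
    (u2 : (S → A) → S → (Fin m → ℝ))
    (hu2 : ∀ d2 s, u2 d2 s = R2 s (d2 s) + ∑ j, p2 s (d2 s) j • R3 j)
    (u1 : (S → A) → (S → A) → S → (Fin m → ℝ))
    (hu1 : ∀ d1 d2 s, u1 d1 d2 s = R1 s (d1 s) + ∑ j, p1 s (d1 s) j • u2 d2 j)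
    (V2 : S → Set (Fin m → ℝ))
    (hV2 : ∀ s, V2 s = {v | ∃ d2 : S → A, (∀ s', d2 s' ∈ Asets s') ∧ v = u2 d2 s})
    (V1 : S → Set (Fin m → ℝ))
    (hV1 : ∀ s, V1 s = {v | ∃ d1 d2 : S → A, (∀ s', d1 s' ∈ Asets s') ∧
      (∀ s', d2 s' ∈ Asets s') ∧ v = u1 d1 d2 s}) :
    ∀ s, F2 s ⊆ V2 s ∧ F1 s ⊆ V1 s := by
  classical
  intro s
  constructor
  · intro v hv
    rw [hF2] at hv
    simp only [Set.mem_iUnion, Set.mem_setOf_eq] at hv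
    obtain ⟨a, ha, hva⟩ := hv
    rw [hV2]
    refine ⟨fun s' => if s' = s then a else (hAne s').some, fun s' => ?_, ?_⟩
    · by_cases h : s' = s
      · subst h; simpa using ha
      · simpa [h] using (hAne s').some_mem
    · rw [hu2]; simp [hva]
  · intro v hv
    rw [hF1] at hv
    simp only [Set.mem_iUnion, Set.mem_setOf_eq] at hv
    obtain ⟨a, ha, w, hw, hva⟩ := hv
    have hwF : ∀ j, w j ∈ F2 j := fun j => by
      have := hw j; rw [hU2] at this; exact this.1
    have hch : ∀ j, ∃ b ∈ Asets j, w j = R2 j b + ∑ k, p2 j b k • R3 k := by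
      intro j
      have := hwF j
      rw [hF2] at this
      simpa only [Set.mem_iUnion, Set.mem_setOf_eq, exists_prop] using this
    choose d2 hd2 hwd2 using hch
    rw [hV1]
    refine ⟨fun s' => if s' = s then a else (hAne s').some, d2, fun s' => ?_, hd2, ?_⟩
    · by_cases h : s' = s
      · subst h; simpa using ha
      · simpa [h] using (hAne s').some_mem
    · rw [hu1, hva]
      simp only [if_pos]
      congr 1
      refine Finset.sum_congr rfl fun j _ => ?_
      rw [hu2, ← hwd2]
end

section
/- Consider a deterministic vector-valued finite-horizon MDP: for each s ∈ S, a ∈ A_s and t < N there exists a unique s⁺ ∈ S with p_t(s⁺|s,a) = 1. Then property (P) holds: F_t(s) ⊆ V_t(s) for all s ∈ S and t < N, where F_t(s) = ⋃_{a ∈ A_s}({R_t(s,a)} ⊕ U_{t+1}(next(s,a,t))) with U_N(s) = {R_N(s)}, U_t(s) = e(F_t(s)), and V_t(s) the set of total rewards of Markovian policies from (t, s). -/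
/-- In a deterministic vector-valued finite-horizon MDP (each state-action pair has a
unique successor), property (P) holds: `F t s ⊆ V t s` for all states `s` and `t < N`. -/
theorem P_holds_deterministic {S A : Type*} (m N : ℕ)
    (Asets : S → Set A) (hAne : ∀ s, (Asets s).Nonempty)
    (R : ℕ → S → A → (Fin m → ℝ)) (RN : S → Fin m → ℝ)
    (p : ℕ → S → A → S → ℝ) (next : S → A → ℕ → S)
    (hdet : ∀ t < N, ∀ s a, p t s a (next s a t) = 1 ∧
      ∀ j, j ≠ next s a t → p t s a j = 0)
    (U F : ℕ → S → Set (Fin m → ℝ))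
    (hUN : ∀ s, U N s = {RN s})
    (hF : ∀ t < N, ∀ s, F t s =
      ⋃ a ∈ Asets s, {v | ∃ w ∈ U (t+1) (next s a t), v = R t s a + w})
    (hU : ∀ t < N, ∀ s, U t s = eff (F t s))
    (val : (ℕ → S → A) → ℕ → S → (Fin m → ℝ))
    (hvalN : ∀ π s, val π N s = RN s)
    (hval : ∀ π, ∀ t < N, ∀ s,
      val π t s = R t s (π t s) + val π (t+1) (next s (π t s) t))
    (V : ℕ → S → Set (Fin m → ℝ))
    (hV : ∀ t s, V t s =
      {v | ∃ π : ℕ → S → A, (∀ t' s', π t' s' ∈ Asets s') ∧ v = val π t s}) :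
    ∀ s, ∀ t < N, F t s ⊆ V t s := by
  classical
  -- val depends only on actions at times ≥ t
  have congrval : ∀ k t, N = t + k → ∀ π π' : ℕ → S → A,
      (∀ u, t ≤ u → ∀ s', π u s' = π' u s') → ∀ s, val π t s = val π' t s := by
    intro k
    induction k with
    | zero =>
      intro t ht π π' _ s
      have : t = N := by omega
      subst this
      rw [hvalN, hvalN]
    | succ k ih =>
      intro t ht π π' hagree s
      have htN : t < N := by omega
      rw [hval π t htN s, hval π' t htN s, hagree t le_rfl s]
      rw [ih (t+1) (by omega) π π' (fun u hu s' => hagree u (by omega) s')]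
  -- main claim by induction on horizon
  have main : ∀ k t, N = t + k → t < N → ∀ s, F t s ⊆ V t s := by
    intro k
    induction k with
    | zero => intro t ht htN; omega
    | succ k ih =>
      intro t ht htN s v hv
      rw [hF t htN s] at hv
      simp only [Set.mem_iUnion, Set.mem_setOf_eq] at hv
      obtain ⟨a, ha, w, hw, hvw⟩ := hv
      set s' := next s a t with hs'
      -- get a policy achieving w from (t+1, s')
      have : ∃ π : ℕ → S → A, (∀ t' s'', π t' s'' ∈ Asets s'') ∧ w = val π (t+1) s' := by
        rcases Nat.lt_or_ge (t+1) N with h1 | h1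
        · have : w ∈ V (t+1) s' := by
            have hk : k ≠ 0 := by omega
            have hle : F (t+1) s' ⊆ V (t+1) s' := ih (t+1) (by omega) h1 s'
            have : w ∈ F (t+1) s' := by
              rw [hU (t+1) h1 s'] at hw
              exact hw.1
            exact hle this
          rw [hV] at this
          exact this
        · have hN : t + 1 = N := by omega
          rw [hN, hUN] at hw
          refine ⟨fun _ s'' => (hAne s'').choose, fun t' s'' => (hAne s'').choose_spec, ?_⟩
          rw [hN, hvalN]
          exact hw
      obtain ⟨π, hπ, hwval⟩ := this
      -- modified policy choosing a at time t in state s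
      set π' : ℕ → S → A := fun u s'' => if u = t ∧ s'' = s then a else π u s'' with hπ'
      have hπ'valid : ∀ t' s'', π' t' s'' ∈ Asets s'' := by
        intro t' s''
        simp only [hπ']
        split
        · rename_i h; rw [h.2]; exact ha
        · exact hπ t' s''
      rw [hV]
      refine ⟨π', hπ'valid, ?_⟩
      have hπ't : π' t s = a := by simp [hπ']
      rw [hval π' t htN s, hπ't]
      have : val π' (t+1) s' = val π (t+1) s' := by
        refine congrval k (t+1) (by omega) π' π ?_ s'
        intro u hu s''
        simp only [hπ']
        rw [if_neg]
        rintro ⟨h1, -⟩; omega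
      rw [this, hvw, ← hwval]
  intro s t htN
  exact main (N - t) t (by omega) htN s
end

section
/- Define U'_N(h_N) = {R_N(s_N)} for h_N = (s_1,...,s_N), and U'_t(h_t) = e(⋃_{a ∈ A_{s_t}}({R_t(s_t,a)} ⊕ ∑_j p_t(j|s_t,a) U'_{t+1}(h_t,j))) for t < N. Then U'_t(h_t) depends on h_t only through its last coordinate s_t; that is, U'_t(h_t) = U_t(s_t), where U_t is defined by White's state-indexed recursion U_N(s) = {R_N(s)}, U_t(s) = e(⋃_{a ∈ A_s}({R_t(s,a)} ⊕ ∑_j p_t(j|s,a) U_{t+1}(j))). -/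
/-- The history-indexed recursion `U'` depends on a history only through its last (most
recent) state: `U' t h_t = U t s_t`, where `U` is White's state-indexed recursion.
Histories are lists with the most recent state first, so `(h_t, j)` is `j :: h_t`. -/
theorem history_recursion_eq_state_recursion {S A : Type*} [Fintype S] (m N : ℕ)
    (Asets : S → Set A)
    (R : ℕ → S → A → (Fin m → ℝ)) (RN : S → Fin m → ℝ) (p : ℕ → S → A → S → ℝ)
    (U : ℕ → S → Set (Fin m → ℝ))
    (hUN : ∀ s, U N s = {RN s})
    (hU : ∀ t < N, ∀ s, U t s = eff (⋃ a ∈ Asets s,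
      {v | ∃ w : S → (Fin m → ℝ), (∀ j, w j ∈ U (t+1) j) ∧
        v = R t s a + ∑ j, p t s a j • w j}))
    (U' : ℕ → List S → Set (Fin m → ℝ))
    (hU'N : ∀ (s : S) (h : List S), U' N (s :: h) = {RN s})
    (hU' : ∀ t < N, ∀ (s : S) (h : List S), U' t (s :: h) = eff (⋃ a ∈ Asets s,
      {v | ∃ w : S → (Fin m → ℝ), (∀ j, w j ∈ U' (t+1) (j :: s :: h)) ∧
        v = R t s a + ∑ j, p t s a j • w j})) :
    ∀ t ≤ N, ∀ (s : S) (h : List S), U' t (s :: h) = U t s := by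
  have key : ∀ d t, t + d = N → ∀ (s : S) (h : List S), U' t (s :: h) = U t s := by
    intro d
    induction d with
    | zero => intro t ht s h; rw [Nat.add_zero] at ht; subst ht; rw [hU'N, hUN]
    | succ d ih =>
      intro t ht s h
      have hlt : t < N := by omega
      have heq : ∀ j : S, U' (t+1) (j :: s :: h) = U (t+1) j :=
        fun j => ih (t+1) (by omega) j (s :: h)
      rw [hU' t hlt s h, hU t hlt s]
      simp only [heq]
  intro t ht s h
  exact key (N - t) t (by omega) s h
end
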